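/- Let sequences u_m, v_m ≥ 0 satisfy the coupled recursion u_{m+1} ≤ (1 + Ch) u_m + C ε v_m + C ε^{ν+1}, v_{m+1} ≤ C u_m + (α + Cε) v_m + C ε^{ν+1}/h with 0 < α < 1, u_0 = v_0 = 0, constants C > 0, and ε ≤ c h for fixed c > 0. Then for h ≤ h₀ sufficiently small and all m with mh ≤ T, u_m ≤ C' ε^{ν+1}/h and v_m ≤ C' ε^{ν+1}/h, with C' depending only on C, c, α, T. -/

import Mathlib

set_option maxHeartbeats 800000


/-- discrete stability lemma for coupled error recursions with a
contracting algebraic component: u_m, v_m ≤ C' ε^{ν+1}/h on mh ≤ T. -/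
theorem stmt16 (C c α T : ℝ) (hC : 0 < C) (hc : 0 < c)
    (hα0 : 0 < α) (hα : α < 1) (hT : 0 < T) :
    ∃ h₀ > 0, ∃ C' > 0, ∀ (ν : ℕ) (h ε : ℝ) (u v : ℕ → ℝ),
      0 < h → h ≤ h₀ → 0 < ε → ε ≤ c * h →
      (∀ m, 0 ≤ u m) → (∀ m, 0 ≤ v m) →
      (∀ m, u (m+1) ≤ (1 + C * h) * u m + C * ε * v m + C * ε ^ (ν+1)) →
      (∀ m, v (m+1) ≤ C * u m + (α + C * ε) * v m + C * ε ^ (ν+1) / h) →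
      u 0 = 0 → v 0 = 0 →
      ∀ m : ℕ, (m : ℝ) * h ≤ T →
        u m ≤ C' * ε ^ (ν+1) / h ∧ v m ≤ C' * ε ^ (ν+1) / h := by
  have h1α : (0:ℝ) < 1 - α := by linarith
  set θ : ℝ := 2 * C * c / (1 - α) with hθdef
  have hθ : 0 < θ := by positivity
  set K : ℝ := C * (1 + θ) with hKdef
  have hK : 0 < K := by positivity
  set M : ℝ := Real.exp (K * T) with hMdef
  have hM : 0 < M := Real.exp_pos _
  set D : ℝ := 2 * (C * M + C) / (1 - α) with hDdef
  have hD : 0 < D := by positivity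
  refine ⟨(1 - α) / (2 * C * c), by positivity, M + D, by positivity, ?_⟩
  intro ν h ε u v hh hhh₀ hε hεch hu0 hv0 hrecu hrecv hu00 hv00
  have hne : h ≠ 0 := ne_of_gt hh
  set E : ℝ := ε ^ (ν + 1) / h with hEdef
  have hE : 0 ≤ E := by positivity
  have hεhE : ε ^ (ν + 1) = h * E := by rw [hEdef]; field_simp
  -- coefficient smallness
  have hCε : C * ε ≤ C * c * h := by nlinarith
  have hCch : C * c * h ≤ (1 - α) / 2 := by
    have := mul_le_mul_of_nonneg_left hhh₀ (le_of_lt (mul_pos hC hc))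
    calc C * c * h ≤ C * c * ((1 - α) / (2 * C * c)) := by nlinarith
      _ = (1 - α) / 2 := by field_simp
  have hθ1α : θ * (1 - α) = 2 * C * c := by rw [hθdef]; exact div_mul_cancel₀ _ h1α.ne'
  -- Lyapunov recursion for w = u + θ h v
  have W : ∀ m, u m + θ * h * v m ≤ ((1 + K * h) ^ m - 1) * E := by
    intro m
    induction m with
    | zero => simp [hu00, hv00]
    | succ m ih =>
      have hKh : (0:ℝ) ≤ 1 + K * h := by nlinarith
      have step1 : u (m + 1) + θ * h * v (m + 1) ≤
          ((1 + C * h) * u m + C * ε * v m + C * ε ^ (ν+1)) +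
          θ * h * (C * u m + (α + C * ε) * v m + C * ε ^ (ν+1) / h) := by
        have := mul_le_mul_of_nonneg_left (hrecv m) (le_of_lt (mul_pos hθ hh))
        linarith [hrecu m]
      have hcoefv : C * ε + θ * h * (α + C * ε) ≤ θ * h := by
        have hθh : (0:ℝ) ≤ θ * h := (mul_pos hθ hh).le
        have hA : θ * h * (C * ε) ≤ θ * h * (C * c * h) :=
          mul_le_mul_of_nonneg_left hCε hθh
        have hB : θ * h * (C * c * h) ≤ θ * h * ((1 - α) / 2) :=
          mul_le_mul_of_nonneg_left hCch hθh
        have hCcheq : θ * h * ((1 - α) / 2) = C * c * h := by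
          linear_combination (h / 2) * hθ1α
        nlinarith
      have hconst : C * ε ^ (ν+1) + θ * h * (C * ε ^ (ν+1) / h) = K * h * E := by
        rw [hεhE, hKdef]; field_simp
      have step2 : ((1 + C * h) * u m + C * ε * v m + C * ε ^ (ν+1)) +
          θ * h * (C * u m + (α + C * ε) * v m + C * ε ^ (ν+1) / h) ≤
          (1 + K * h) * (u m + θ * h * v m) + K * h * E := by
        have hvc : (C * ε + θ * h * (α + C * ε)) * v m ≤ θ * h * v m :=
          mul_le_mul_of_nonneg_right hcoefv (hv0 m)
        have hvc2 : θ * h * v m ≤ (1 + K * h) * (θ * h * v m) := by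
          have hpos : 0 ≤ K * h * (θ * h * v m) :=
            mul_nonneg (mul_nonneg hK.le hh.le)
              (mul_nonneg (mul_nonneg hθ.le hh.le) (hv0 m))
          nlinarith
        calc ((1 + C * h) * u m + C * ε * v m + C * ε ^ (ν+1)) +
            θ * h * (C * u m + (α + C * ε) * v m + C * ε ^ (ν+1) / h)
            = (1 + K * h) * u m + (C * ε + θ * h * (α + C * ε)) * v m +
              (C * ε ^ (ν+1) + θ * h * (C * ε ^ (ν+1) / h)) := by
              rw [hKdef]; ring
          _ ≤ (1 + K * h) * u m + (1 + K * h) * (θ * h * v m) + K * h * E := by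
              rw [hconst]; linarith
          _ = (1 + K * h) * (u m + θ * h * v m) + K * h * E := by ring
      have step3 : (1 + K * h) * (u m + θ * h * v m) + K * h * E ≤
          (1 + K * h) * (((1 + K * h) ^ m - 1) * E) + K * h * E := by
        have := mul_le_mul_of_nonneg_left ih hKh
        linarith
      have : (1 + K * h) * (((1 + K * h) ^ m - 1) * E) + K * h * E =
          ((1 + K * h) ^ (m + 1) - 1) * E := by rw [pow_succ]; ring
      linarith
  -- exponential bound on the growth factor
  have hpow : ∀ m : ℕ, (m : ℝ) * h ≤ T → (1 + K * h) ^ m ≤ M := by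
    intro m hm
    have h1 : 1 + K * h ≤ Real.exp (K * h) := by
      have := Real.add_one_le_exp (K * h); linarith
    have h2 : (1 + K * h) ^ m ≤ Real.exp (K * h) ^ m :=
      pow_le_pow_left₀ (by nlinarith) h1 m
    have h3 : Real.exp (K * h) ^ m = Real.exp ((m : ℝ) * (K * h)) := by
      rw [← Real.exp_nat_mul]
    have h4 : Real.exp ((m : ℝ) * (K * h)) ≤ M := by
      rw [hMdef]
      apply Real.exp_le_exp.mpr
      calc (m : ℝ) * (K * h) = K * ((m : ℝ) * h) := by ring
        _ ≤ K * T := by nlinarith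
    calc (1 + K * h) ^ m ≤ Real.exp (K * h) ^ m := h2
      _ = _ := h3
      _ ≤ M := h4
  -- bound on u
  have hU : ∀ m : ℕ, (m : ℝ) * h ≤ T → u m ≤ M * E := by
    intro m hm
    have h1 := W m
    have h2 := hpow m hm
    have h3 : ((1 + K * h) ^ m - 1) * E ≤ M * E := by nlinarith
    have h4 : 0 ≤ θ * h * v m := mul_nonneg (mul_nonneg hθ.le hh.le) (hv0 m)
    linarith
  -- bound on v by contraction
  have hDeq : (1 - α) / 2 * D = C * M + C := by rw [hDdef]; field_simp
  have hV : ∀ m : ℕ, (m : ℝ) * h ≤ T → v m ≤ D * E := by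
    intro m
    induction m with
    | zero => intro _; rw [hv00]; positivity
    | succ m ih =>
      intro hm
      have hmT : (m : ℝ) * h ≤ T := by
        push_cast at hm ⊢; nlinarith
      have ihm := ih hmT
      have hu := hU m hmT
      have hcon : α + C * ε ≤ (1 + α) / 2 := by nlinarith
      have h1 := hrecv m
      have h2 : (α + C * ε) * v m ≤ (1 + α) / 2 * (D * E) := by
        have := mul_le_mul_of_nonneg_right hcon (hv0 m)
        nlinarith [hv0 m]
      have h3 : C * u m ≤ C * (M * E) := by nlinarith
      have h4 : C * ε ^ (ν+1) / h = C * E := by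
        rw [hEdef]; field_simp
      rw [h4] at h1
      have h5 : C * (M * E) + (1 + α) / 2 * (D * E) + C * E = D * E := by
        linear_combination (-E) * hDeq
      linarith
  -- conclude
  intro m hm
  have hU' := hU m hm
  have hV' := hV m hm
  have hgoal : (M + D) * ε ^ (ν+1) / h = (M + D) * E := by
    rw [hEdef]; field_simp
  have hsplit : (M + D) * E = M * E + D * E := by ring
  have hDE : 0 ≤ D * E := mul_nonneg hD.le hE
  have hME : 0 ≤ M * E := mul_nonneg hM.le hE
  constructor
  · rw [hgoal]; linarith
  · rw [hgoal]; linarith
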